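/- arXiv:2203.02695 — 2 statements merged into one kernel-verified Lean document; each statement's English description precedes it below -/
import Mathlib

section
/- Every gluing-parallel iposet P admits a decomposition P = S*W*T where S is a gluing-parallel starter, W is a gluing-parallel Winkowski iposet, and T is a gluing-parallel terminator. -/
/-- A poset with interfaces (iposet): a finite strict poset on `Fin n`
together with injective source and target maps whose images lie in the
minimal respectively maximal elements. -/
structure Iposet where
  n : ℕ
  lt : Fin n → Fin n → Prop
  lt_irrefl : ∀ x, ¬ lt x x
  lt_trans : ∀ x y z, lt x y → lt y z → lt x z
  k : ℕ
  m : ℕ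
  s : Fin k → Fin n
  t : Fin m → Fin n
  s_inj : Function.Injective s
  t_inj : Function.Injective t
  s_min : ∀ i x, ¬ lt x (s i)
  t_max : ∀ i x, ¬ lt (t i) x

namespace Iposet

/-- Isomorphism of iposets: a poset isomorphism commuting with the
source and target maps. -/
def Iso (P Q : Iposet) : Prop :=
  ∃ (hk : P.k = Q.k) (hm : P.m = Q.m) (f : Fin P.n ≃ Fin Q.n),
    (∀ x y, P.lt x y ↔ Q.lt (f x) (f y)) ∧
    (∀ i, f (P.s i) = Q.s (Fin.cast hk i)) ∧
    (∀ i, f (P.t i) = Q.t (Fin.cast hm i))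

/-- Isomorphism of underlying posets (interfaces disregarded). -/
def PosetIso (P Q : Iposet) : Prop :=
  ∃ f : Fin P.n ≃ Fin Q.n, ∀ x y, P.lt x y ↔ Q.lt (f x) (f y)

def Discrete (P : Iposet) : Prop := ∀ x y, ¬ P.lt x y

def Starter (P : Iposet) : Prop := Discrete P ∧ Function.Bijective P.t

def Terminator (P : Iposet) : Prop := Discrete P ∧ Function.Bijective P.s

def Symmetry (P : Iposet) : Prop :=
  Discrete P ∧ Function.Bijective P.s ∧ Function.Bijective P.t

def InterfaceConsistent (P : Iposet) : Prop :=
  ∀ (i j : Fin P.k) (i' j' : Fin P.m),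
    P.s i = P.t i' → P.s j = P.t j' → ((i : ℕ) < (j : ℕ) ↔ (i' : ℕ) < (j' : ℕ))

def IsMinEl (P : Iposet) (x : Fin P.n) : Prop := ∀ y, ¬ P.lt y x
def IsMaxEl (P : Iposet) (x : Fin P.n) : Prop := ∀ y, ¬ P.lt x y

def LeftWink (P : Iposet) : Prop := ∀ x, IsMinEl P x ↔ ∃ i, P.s i = x
def RightWink (P : Iposet) : Prop := ∀ x, IsMaxEl P x ↔ ∃ i, P.t i = x
def Wink (P : Iposet) : Prop := LeftWink P ∧ RightWink P

/-- Witness data exhibiting `R` as the gluing composition `P * Q`. -/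
structure GluingData (P Q R : Iposet) where
  hg : P.m = Q.k
  hk : R.k = P.k
  hm : R.m = Q.m
  f : Fin P.n → Fin R.n
  g : Fin Q.n → Fin R.n
  f_inj : Function.Injective f
  g_inj : Function.Injective g
  cover : ∀ x, (∃ a, f a = x) ∨ (∃ b, g b = x)
  agree : ∀ i : Fin P.m, f (P.t i) = g (Q.s (Fin.cast hg i))
  overlap : ∀ a b, f a = g b → ∃ i, a = P.t i
  order : ∀ x y, R.lt x y ↔
      (∃ a b, f a = x ∧ f b = y ∧ P.lt a b) ∨
      (∃ a b, g a = x ∧ g b = y ∧ Q.lt a b) ∨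
      (∃ a b, f a = x ∧ g b = y ∧ (∀ i, a ≠ P.t i) ∧ (∀ j, b ≠ Q.s j))
  s_eq : ∀ i, R.s i = f (P.s (Fin.cast hk i))
  t_eq : ∀ i, R.t i = g (Q.t (Fin.cast hm i))

/-- `R` is (isomorphic to) the gluing composition `P * Q`. -/
def IsGluing (P Q R : Iposet) : Prop := Nonempty (GluingData P Q R)

/-- Witness data exhibiting `R` as the parallel composition `P ⊗ Q`. -/
structure ParData (P Q R : Iposet) where
  hk : R.k = P.k + Q.k
  hm : R.m = P.m + Q.m
  f : Fin P.n → Fin R.n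
  g : Fin Q.n → Fin R.n
  f_inj : Function.Injective f
  g_inj : Function.Injective g
  cover : ∀ x, (∃ a, f a = x) ∨ (∃ b, g b = x)
  disjoint : ∀ a b, f a ≠ g b
  order : ∀ x y, R.lt x y ↔
      (∃ a b, f a = x ∧ f b = y ∧ P.lt a b) ∨
      (∃ a b, g a = x ∧ g b = y ∧ Q.lt a b)
  s_eq₁ : ∀ i : Fin P.k, R.s (Fin.cast hk.symm (Fin.castAdd Q.k i)) = f (P.s i)
  s_eq₂ : ∀ i : Fin Q.k, R.s (Fin.cast hk.symm (Fin.natAdd P.k i)) = g (Q.s i)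
  t_eq₁ : ∀ i : Fin P.m, R.t (Fin.cast hm.symm (Fin.castAdd Q.m i)) = f (P.t i)
  t_eq₂ : ∀ i : Fin Q.m, R.t (Fin.cast hm.symm (Fin.natAdd P.m i)) = g (Q.t i)

/-- `R` is (isomorphic to) the parallel composition `P ⊗ Q`. -/
def IsPar (P Q R : Iposet) : Prop := Nonempty (ParData P Q R)

/-- Gluing-parallel iposets: built from the (four) iposets on a single
point by finitely many gluing and parallel compositions, or empty. -/
inductive GP : Iposet → Prop
  | empty (P : Iposet) : P.n = 0 → GP P
  | single (P : Iposet) : P.n = 1 → GP P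
  | glue (P Q R : Iposet) : GP P → GP Q → IsGluing P Q R → GP R
  | par (P Q R : Iposet) : GP P → GP Q → IsPar P Q R → GP R

end Iposet

namespace Iposet

lemma k_le_n (P : Iposet) : P.k ≤ P.n := by
  simpa using Fintype.card_le_of_injective P.s P.s_inj

lemma m_le_n (P : Iposet) : P.m ≤ P.n := by
  simpa using Fintype.card_le_of_injective P.t P.t_inj

/-- A discrete iposet with strictly monotone interface maps. -/
def mkD (n k m : ℕ) (σ : Fin k → Fin n) (τ : Fin m → Fin n)
    (hσ : StrictMono σ) (hτ : StrictMono τ) : Iposet :=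
  ⟨n, fun _ _ => False, fun _ h => h, fun _ _ _ h _ => h, k, m, σ, τ,
    hσ.injective, hτ.injective, fun _ _ h => h, fun _ _ h => h⟩

@[simp] lemma mkD_n {n k m σ τ hσ hτ} : (mkD n k m σ τ hσ hτ).n = n := rfl
@[simp] lemma mkD_k {n k m σ τ hσ hτ} : (mkD n k m σ τ hσ hτ).k = k := rfl
@[simp] lemma mkD_m {n k m σ τ hσ hτ} : (mkD n k m σ τ hσ hτ).m = m := rfl
@[simp] lemma mkD_s {n k m σ τ hσ hτ} : (mkD n k m σ τ hσ hτ).s = σ := rfl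
@[simp] lemma mkD_t {n k m σ τ hσ hτ} : (mkD n k m σ τ hσ hτ).t = τ := rfl
@[simp] lemma mkD_lt {n k m σ τ hσ hτ} {x y} :
    (mkD n k m σ τ hσ hτ).lt x y ↔ False := Iff.rfl

lemma split_mono {n k : ℕ} (σ : Fin k → Fin (n+1)) (hσ : StrictMono σ) :
    ∃ (k' k'' : ℕ) (h : k = k' + k'') (σ' : Fin k' → Fin n),
      StrictMono σ' ∧ k'' ≤ 1 ∧
      (∀ i : Fin k', ((σ (Fin.cast h.symm (Fin.castAdd k'' i)) : ℕ)) = (σ' i : ℕ)) ∧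
      (∀ i : Fin k'', ((σ (Fin.cast h.symm (Fin.natAdd k' i)) : ℕ)) = n) := by
  by_cases hs : ∃ i, ((σ i : ℕ)) = n
  · obtain ⟨i0, hi0⟩ := hs
    have hk : 0 < k := i0.pos
    have hk1 : k - 1 < k := by omega
    have hlast : ((σ ⟨k - 1, hk1⟩ : ℕ)) = n := by
      have hle : i0 ≤ (⟨k - 1, hk1⟩ : Fin k) := by
        rw [Fin.le_def]
        have := i0.isLt
        simp only []
        omega
      have h1 : ((σ i0 : ℕ)) ≤ ((σ ⟨k - 1, hk1⟩ : ℕ)) :=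
        Fin.le_def.mp (hσ.monotone hle)
      have h2 := (σ ⟨k - 1, hk1⟩).isLt
      omega
    have hsmall : ∀ j : Fin k, (j : ℕ) < k - 1 → ((σ j : ℕ)) < n := by
      intro j hj
      have h1 : ((σ j : ℕ)) < ((σ ⟨k - 1, hk1⟩ : ℕ)) := by
        apply Fin.lt_def.mp
        apply hσ
        rw [Fin.lt_def]
        exact hj
      omega
    refine ⟨k - 1, 1, by omega, fun i => ⟨(σ ⟨i, by omega⟩ : ℕ), hsmall _ i.isLt⟩,
      ?_, by omega, ?_, ?_⟩
    · intro a b hab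
      rw [Fin.lt_def]
      apply Fin.lt_def.mp
      apply hσ
      rw [Fin.lt_def]
      exact hab
    · intro i; rfl
    · intro i
      have he : (Fin.cast (by omega : k - 1 + 1 = k) (Fin.natAdd (k - 1) i)) =
          (⟨k - 1, hk1⟩ : Fin k) := by
        apply Fin.ext
        have := i.isLt
        simp only [Fin.coe_cast, Fin.coe_natAdd]
        omega
      rw [he]
      exact hlast
  · push_neg at hs
    refine ⟨k, 0, by omega, fun i => ⟨(σ i : ℕ), by
      have h1 := (σ i).isLt
      have h2 := hs i
      omega⟩, ?_, by omega, ?_, ?_⟩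
    · intro a b hab
      rw [Fin.lt_def]
      apply Fin.lt_def.mp
      exact hσ hab
    · intro i
      have he : (Fin.cast (by omega : k + 0 = k) (Fin.castAdd 0 i)) = i := by
        apply Fin.ext; simp
      rw [he]
    · intro i; exact absurd i.isLt (by omega)

lemma gp_mkD : ∀ (n k m : ℕ) (σ : Fin k → Fin n) (τ : Fin m → Fin n)
    (hσ : StrictMono σ) (hτ : StrictMono τ), GP (mkD n k m σ τ hσ hτ) := by
  intro n
  induction n with
  | zero => intro k m σ τ hσ hτ; exact GP.empty _ rfl
  | succ n ih =>
    intro k m σ τ hσ hτ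
    obtain ⟨k', k'', hk, σ', hσ', hk1, hsc, hsn⟩ := split_mono σ hσ
    obtain ⟨m', m'', hm, τ', hτ', hm1, htc, htn⟩ := split_mono τ hτ
    have mono1 : StrictMono (fun _ : Fin k'' => (0 : Fin 1)) := by
      intro a b hab
      have ha := a.isLt; have hb := b.isLt
      rw [Fin.lt_def] at hab; omega
    have mono2 : StrictMono (fun _ : Fin m'' => (0 : Fin 1)) := by
      intro a b hab
      have ha := a.isLt; have hb := b.isLt
      rw [Fin.lt_def] at hab; omega
    refine GP.par (mkD n k' m' σ' τ' hσ' hτ')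
      (mkD 1 k'' m'' (fun _ => 0) (fun _ => 0) mono1 mono2) _
      (ih k' m' σ' τ' hσ' hτ') (GP.single _ rfl) ⟨?_⟩
    refine ⟨hk, hm, Fin.castSucc, fun _ => Fin.last n, Fin.castSucc_injective n,
      fun a b _ => Fin.ext (by
        have ha := a.isLt; have hb := b.isLt
        simp only [mkD_n] at ha hb
        omega), ?_, ?_, ?_, ?_, ?_, ?_, ?_⟩
    · intro x
      have hx := x.isLt
      simp only [mkD_n] at hx
      by_cases hxn : (x : ℕ) = n
      · exact Or.inr ⟨(0 : Fin 1), by apply Fin.ext; simpa using hxn.symm⟩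
      · exact Or.inl ⟨(⟨(x : ℕ), by omega⟩ : Fin n), by apply Fin.ext; simp⟩
    · intro a b hab
      have := congrArg Fin.val hab
      simp only [Fin.coe_castSucc, Fin.val_last] at this
      have ha := a.isLt
      simp only [mkD_n] at ha
      omega
    · intro x y; simp; exact ⟨fun _ _ _ _ h => h, fun _ _ h => h⟩
    · intro i; apply Fin.ext; simpa using hsc i
    · intro i; apply Fin.ext; simpa using hsn i
    · intro i; apply Fin.ext; simpa using htc i
    · intro i; apply Fin.ext; simpa using htn i

end Iposet

namespace Iposet

lemma gp_ic {P : Iposet} (h : GP P) : InterfaceConsistent P := by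
  induction h with
  | empty P h =>
    intro i j i' j' _ _
    exact absurd i.isLt (by have := k_le_n P; omega)
  | single P h =>
    intro i j i' j' _ _
    have h1 := k_le_n P; have h2 := m_le_n P
    have := i.isLt; have := j.isLt; have := i'.isLt; have := j'.isLt
    omega
  | glue A B R hA hB hg ihA ihB =>
    obtain ⟨d⟩ := hg
    intro i j i' j' h1 h2
    rw [d.s_eq i, d.t_eq i'] at h1
    rw [d.s_eq j, d.t_eq j'] at h2
    obtain ⟨r, hr⟩ := d.overlap _ _ h1
    obtain ⟨r', hr'⟩ := d.overlap _ _ h2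
    rw [hr] at h1
    rw [hr'] at h2
    rw [d.agree r] at h1
    rw [d.agree r'] at h2
    have e1 : B.s (Fin.cast d.hg r) = B.t (Fin.cast d.hm i') := d.g_inj h1
    have e2 : B.s (Fin.cast d.hg r') = B.t (Fin.cast d.hm j') := d.g_inj h2
    have c1 := ihA (Fin.cast d.hk i) (Fin.cast d.hk j) r r' hr hr'
    have c2 := ihB (Fin.cast d.hg r) (Fin.cast d.hg r') (Fin.cast d.hm i')
      (Fin.cast d.hm j') e1 e2
    simp only [Fin.coe_cast] at c1 c2
    rw [c1, c2]
  | par A B R hA hB hp ihA ihB =>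
    obtain ⟨d⟩ := hp
    intro i j i' j' h1 h2
    have sdec : ∀ (i : Fin R.k),
        (∃ a : Fin A.k, (i : ℕ) = (a : ℕ) ∧ R.s i = d.f (A.s a)) ∨
        (∃ b : Fin B.k, (i : ℕ) = A.k + (b : ℕ) ∧ R.s i = d.g (B.s b)) := by
      intro i
      have hkk := d.hk
      have hi : (i : ℕ) < A.k + B.k := by have := i.isLt; omega
      by_cases hlt : (i : ℕ) < A.k
      · refine Or.inl ⟨⟨(i : ℕ), hlt⟩, rfl, ?_⟩
        have he : i = Fin.cast d.hk.symm (Fin.castAdd B.k ⟨(i : ℕ), hlt⟩) :=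
          Fin.ext (by simp)
        conv_lhs => rw [he]
        exact d.s_eq₁ _
      · refine Or.inr ⟨⟨(i : ℕ) - A.k, by omega⟩, by simp; omega, ?_⟩
        have he : i = Fin.cast d.hk.symm (Fin.natAdd A.k ⟨(i : ℕ) - A.k, by omega⟩) :=
          Fin.ext (by simp; omega)
        conv_lhs => rw [he]
        exact d.s_eq₂ _
    have tdec : ∀ (i : Fin R.m),
        (∃ a : Fin A.m, (i : ℕ) = (a : ℕ) ∧ R.t i = d.f (A.t a)) ∨
        (∃ b : Fin B.m, (i : ℕ) = A.m + (b : ℕ) ∧ R.t i = d.g (B.t b)) := by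
      intro i
      have hmm := d.hm
      have hi : (i : ℕ) < A.m + B.m := by have := i.isLt; omega
      by_cases hlt : (i : ℕ) < A.m
      · refine Or.inl ⟨⟨(i : ℕ), hlt⟩, rfl, ?_⟩
        have he : i = Fin.cast d.hm.symm (Fin.castAdd B.m ⟨(i : ℕ), hlt⟩) :=
          Fin.ext (by simp)
        conv_lhs => rw [he]
        exact d.t_eq₁ _
      · refine Or.inr ⟨⟨(i : ℕ) - A.m, by omega⟩, by simp; omega, ?_⟩
        have he : i = Fin.cast d.hm.symm (Fin.natAdd A.m ⟨(i : ℕ) - A.m, by omega⟩) :=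
          Fin.ext (by simp; omega)
        conv_lhs => rw [he]
        exact d.t_eq₂ _
    rcases sdec i with ⟨a1, hv1, hs1⟩ | ⟨b1, hv1, hs1⟩ <;>
      rcases sdec j with ⟨a2, hv2, hs2⟩ | ⟨b2, hv2, hs2⟩ <;>
      rcases tdec i' with ⟨c1, hw1, ht1⟩ | ⟨e1, hw1, ht1⟩ <;>
      rcases tdec j' with ⟨c2, hw2, ht2⟩ | ⟨e2, hw2, ht2⟩ <;>
      rw [hs1, ht1] at h1 <;> rw [hs2, ht2] at h2 <;>
      first
        | exact absurd h1 (d.disjoint _ _)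
        | exact absurd h2 (d.disjoint _ _)
        | exact absurd h1.symm (d.disjoint _ _)
        | exact absurd h2.symm (d.disjoint _ _)
        | (first
            | (have hic := ihA a1 a2 c1 c2 (d.f_inj h1) (d.f_inj h2)
               have := c1.isLt; have := c2.isLt
               omega)
            | (have hic := ihB b1 b2 e1 e2 (d.g_inj h1) (d.g_inj h2)
               have := e1.isLt; have := e2.isLt
               omega)
            | (have := a1.isLt; have := c1.isLt; have := b2.isLt; have := e2.isLt
               omega)
            | (have := a2.isLt; have := c2.isLt; have := b1.isLt; have := e1.isLt
               omega))

end Iposet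

namespace Iposet


lemma cast_inj {n m : ℕ} (h : n = m) : Function.Injective (Fin.cast h) := by
  intro a b hab
  have : (Fin.cast h a : ℕ) = (Fin.cast h b : ℕ) := congrArg Fin.val hab
  exact Fin.ext this

lemma min_transfer {W P : Iposet} (hn : W.n = P.n)
    (hlt : ∀ x y, W.lt x y ↔ P.lt (Fin.cast hn x) (Fin.cast hn y)) (x : Fin W.n) :
    IsMinEl W x ↔ IsMinEl P (Fin.cast hn x) := by
  constructor
  · intro hm y hy
    apply hm (Fin.cast hn.symm y)
    apply (hlt _ _).mpr
    have he : Fin.cast hn (Fin.cast hn.symm y) = y := Fin.ext rfl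
    rw [he]; exact hy
  · intro hm y hy
    exact hm (Fin.cast hn y) ((hlt _ _).mp hy)

lemma max_transfer {W P : Iposet} (hn : W.n = P.n)
    (hlt : ∀ x y, W.lt x y ↔ P.lt (Fin.cast hn x) (Fin.cast hn y)) (x : Fin W.n) :
    IsMaxEl W x ↔ IsMaxEl P (Fin.cast hn x) := by
  constructor
  · intro hm y hy
    apply hm (Fin.cast hn.symm y)
    apply (hlt _ _).mpr
    have he : Fin.cast hn (Fin.cast hn.symm y) = y := Fin.ext rfl
    rw [he]; exact hy
  · intro hm y hy
    exact hm (Fin.cast hn y) ((hlt _ _).mp hy)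

/-- Transport GP along a structure-respecting bijection. -/
lemma gp_transport (W0 W' : Iposet) (h0 : GP W0)
    (e : Fin W0.n → Fin W'.n) (hbij : Function.Bijective e)
    (hlt : ∀ x y, W'.lt (e x) (e y) ↔ W0.lt x y)
    (hk : W'.k = W0.k) (hm : W'.m = W0.m)
    (hs : ∀ i, W'.s i = e (W0.s (Fin.cast hk i)))
    (ht : ∀ i, W'.t i = e (W0.t (Fin.cast hm i))) : GP W' := by
  refine GP.glue W0 (mkD W0.m W0.m W0.m id id strictMono_id strictMono_id) W' h0
    (gp_mkD _ _ _ _ _ _ _) ⟨?_⟩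
  refine ⟨rfl, hk, hm, e, fun i => e (W0.t i), hbij.injective,
    fun a b hab => W0.t_inj (hbij.injective hab), ?_, ?_, ?_, ?_, ?_, ?_⟩
  · intro x
    obtain ⟨a, ha⟩ := hbij.surjective x
    exact Or.inl ⟨a, ha⟩
  · intro i; rfl
  · intro a b hab
    exact ⟨b, hbij.injective hab⟩
  · intro x y
    constructor
    · intro hxy
      obtain ⟨a, rfl⟩ := hbij.surjective x
      obtain ⟨b, rfl⟩ := hbij.surjective y
      exact Or.inl ⟨a, b, rfl, rfl, (hlt _ _).mp hxy⟩
    · rintro (⟨a, b, rfl, rfl, hab⟩ | ⟨a, b, _, _, hab⟩ | ⟨a, b, _, _, _, hnb⟩)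
      · exact (hlt _ _).mpr hab
      · exact hab.elim
      · exact (hnb b rfl).elim
  · exact hs
  · exact ht


end Iposet

namespace Iposet

theorem gp_wink {P : Iposet} (h : GP P) :
    ∃ (W : Iposet) (hn : W.n = P.n),
      (∀ x y, W.lt x y ↔ P.lt (Fin.cast hn x) (Fin.cast hn y)) ∧ GP W ∧
      (∃ σ : Fin P.k → Fin W.k, StrictMono σ ∧ ∀ i, Fin.cast hn (W.s (σ i)) = P.s i) ∧
      (∀ x, IsMinEl P x → ∃ i, Fin.cast hn (W.s i) = x) ∧
      (∃ τ : Fin P.m → Fin W.m, StrictMono τ ∧ ∀ i, Fin.cast hn (W.t (τ i)) = P.t i) ∧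
      (∀ x, IsMaxEl P x → ∃ i, Fin.cast hn (W.t i) = x) := by
  induction h with
  | empty Q hQ =>
    have hk0 : Q.k = 0 := by have := k_le_n Q; omega
    refine ⟨⟨Q.n, Q.lt, Q.lt_irrefl, Q.lt_trans, 0, 0, fun i => i.elim0,
      fun i => i.elim0, fun a => a.elim0, fun a => a.elim0,
      fun i => i.elim0, fun i => i.elim0⟩, rfl, fun x y => Iff.rfl,
      GP.empty _ hQ, ⟨fun i => absurd i.isLt (by omega), ?_, ?_⟩, ?_,
      ⟨fun i => absurd (i.isLt) (by have := m_le_n Q; omega), ?_, ?_⟩, ?_⟩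
    · intro a b _; exact absurd a.isLt (by omega)
    · intro i; exact absurd i.isLt (by omega)
    · intro x _; exact absurd x.isLt (by omega)
    · intro a b _; exact absurd a.isLt (by have := m_le_n Q; omega)
    · intro i; exact absurd i.isLt (by have := m_le_n Q; omega)
    · intro x _; exact absurd x.isLt (by omega)
  | single Q hQ =>
    have hall : ∀ x y : Fin Q.n, x = y := by
      intro x y; apply Fin.ext
      have := x.isLt; have := y.isLt; omega
    have hnolt : ∀ x y, ¬ Q.lt x y := by
      intro x y hxy
      have := hall x y
      subst this
      exact Q.lt_irrefl x hxy
    have h0 : (0 : ℕ) < Q.n := by omega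
    refine ⟨⟨Q.n, Q.lt, Q.lt_irrefl, Q.lt_trans, 1, 1, fun _ => ⟨0, h0⟩,
      fun _ => ⟨0, h0⟩,
      fun a b _ => Fin.ext (by have := a.isLt; have := b.isLt; omega),
      fun a b _ => Fin.ext (by have := a.isLt; have := b.isLt; omega),
      fun _ x => hnolt x _, fun _ x => hnolt _ x⟩, rfl, fun x y => Iff.rfl,
      GP.single _ hQ, ⟨fun _ => 0, ?_, fun i => hall _ _⟩,
      fun x _ => ⟨0, hall _ _⟩,
      ⟨fun _ => 0, ?_, fun i => hall _ _⟩, fun x _ => ⟨0, hall _ _⟩⟩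
    · intro a b hab
      have ha := a.isLt; have hb := b.isLt
      have := k_le_n Q
      rw [Fin.lt_def] at hab
      omega
    · intro a b hab
      have ha := a.isLt; have hb := b.isLt
      have := m_le_n Q
      rw [Fin.lt_def] at hab
      omega
  | glue A B R hA hB hg ihA ihB =>
    obtain ⟨d⟩ := hg
    obtain ⟨WA, hnA, hltA, hgpA, ⟨σA, hσA, hσAc⟩, hminA, ⟨τA, hτA, hτAc⟩, hmaxA⟩ := ihA
    obtain ⟨WB, hnB, hltB, hgpB, ⟨σB, hσB, hσBc⟩, hminB, ⟨τB, hτB, hτBc⟩, hmaxB⟩ := ihB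
    -- basic facts
    have minP_f : ∀ a, IsMinEl A a → IsMinEl R (d.f a) := by
      intro a ha y hy
      rcases (d.order y (d.f a)).mp hy with ⟨a', b', h1, h2, h3⟩ |
        ⟨a', b', h1, h2, h3⟩ | ⟨a', b', h1, h2, h3, h4⟩
      · have hba : b' = a := d.f_inj h2
        exact ha a' (hba ▸ h3)
      · obtain ⟨i, hi⟩ := d.overlap a b' h2.symm
        have hb' : b' = B.s (Fin.cast d.hg i) := d.g_inj (by rw [h2, hi, d.agree i])
        exact B.s_min _ a' (hb' ▸ h3)
      · obtain ⟨i, hi⟩ := d.overlap a b' h2.symm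
        have hb' : b' = B.s (Fin.cast d.hg i) := d.g_inj (by rw [h2, hi, d.agree i])
        exact h4 _ hb'
    have maxP_g : ∀ b, IsMaxEl B b → IsMaxEl R (d.g b) := by
      intro b hb y hy
      rcases (d.order (d.g b) y).mp hy with ⟨a', b', h1, h2, h3⟩ |
        ⟨a', b', h1, h2, h3⟩ | ⟨a', b', h1, h2, h3, h4⟩
      · obtain ⟨i, hi⟩ := d.overlap a' b h1
        exact A.t_max i b' (hi ▸ h3)
      · have hba : a' = b := d.g_inj h1
        exact hb b' (hba ▸ h3)
      · obtain ⟨i, hi⟩ := d.overlap a' b h1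
        exact h3 i hi
    have minA_f : ∀ a, IsMinEl R (d.f a) → IsMinEl A a := by
      intro a ha y hy
      exact ha (d.f y) ((d.order _ _).mpr (Or.inl ⟨y, a, rfl, rfl, hy⟩))
    have maxB_g : ∀ b, IsMaxEl R (d.g b) → IsMaxEl B b := by
      intro b hb y hy
      exact hb (d.g y) ((d.order _ _).mpr (Or.inr (Or.inl ⟨b, y, rfl, rfl, hy⟩)))
    by_cases hAT : ∀ x, ∃ i, A.t i = x
    · -- A.t surjective: R is B with renamed sources
      have hAdisc : ∀ x y, ¬ A.lt x y := by
        intro x y hxy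
        obtain ⟨i, rfl⟩ := hAT x
        exact A.t_max i y hxy
      have gsurj : ∀ x, ∃ b, d.g b = x := by
        intro x
        rcases d.cover x with ⟨a, rfl⟩ | hb
        · obtain ⟨i, rfl⟩ := hAT a
          exact ⟨B.s (Fin.cast d.hg i), (d.agree i).symm⟩
        · exact hb
      have hltgg : ∀ x y, R.lt (d.g x) (d.g y) ↔ B.lt x y := by
        intro x y
        constructor
        · intro hxy
          rcases (d.order _ _).mp hxy with ⟨a', b', h1, h2, h3⟩ |
            ⟨a', b', h1, h2, h3⟩ | ⟨a', b', h1, h2, h3, h4⟩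
          · exact absurd h3 (hAdisc _ _)
          · rw [d.g_inj h1, d.g_inj h2] at h3; exact h3
          · obtain ⟨i, hi⟩ := hAT a'
            exact absurd hi.symm (h3 i)
        · intro hxy
          exact (d.order _ _).mpr (Or.inr (Or.inl ⟨x, y, rfl, rfl, hxy⟩))
      -- source reindexing
      have hι : ∀ i : Fin A.k, ∃ r : Fin A.m, A.t r = A.s i := fun i => hAT (A.s i)
      choose ι hι using hι
      have icA := gp_ic hA
      have hιmono : ∀ x y : Fin A.k, (x : ℕ) < (y : ℕ) → (ι x : ℕ) < (ι y : ℕ) := by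
        intro x y hxy
        exact (icA x y (ι x) (ι y) (hι x).symm (hι y).symm).mp hxy
      have minB_g : ∀ b, IsMinEl B b → IsMinEl R (d.g b) := by
        intro b hb y hy
        obtain ⟨b', rfl⟩ := gsurj y
        exact hb b' ((hltgg _ _).mp hy)
      have minB_g' : ∀ b, IsMinEl R (d.g b) → IsMinEl B b := by
        intro b hb y hy
        exact hb (d.g y) ((hltgg _ _).mpr hy)
      refine ⟨⟨R.n, R.lt, R.lt_irrefl, R.lt_trans, WB.k, WB.m,
        fun i => d.g (Fin.cast hnB (WB.s i)), fun i => d.g (Fin.cast hnB (WB.t i)),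
        ?_, ?_, ?_, ?_⟩, rfl, fun x y => Iff.rfl, ?_, ⟨?_, ?_, ?_⟩, ?_, ⟨?_, ?_, ?_⟩, ?_⟩
      · intro a b hab
        exact WB.s_inj (cast_inj hnB (d.g_inj hab))
      · intro a b hab
        exact WB.t_inj (cast_inj hnB (d.g_inj hab))
      · intro i x
        exact minB_g _ ((min_transfer hnB hltB _).mp (fun y => WB.s_min i y)) x
      · intro i x
        exact maxP_g _ ((max_transfer hnB hltB _).mp (fun y => WB.t_max i y)) x
      · -- GP via transport
        refine gp_transport WB _ hgpB (fun x => d.g (Fin.cast hnB x)) ⟨?_, ?_⟩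
          ?_ rfl rfl (fun i => rfl) (fun i => rfl)
        · intro a b hab
          exact cast_inj hnB (d.g_inj hab)
        · intro x
          obtain ⟨b, rfl⟩ := gsurj x
          exact ⟨Fin.cast hnB.symm b, congrArg d.g (Fin.ext rfl)⟩
        · intro x y
          show R.lt _ _ ↔ _
          rw [hltgg]
          exact (hltB x y).symm
      · exact fun i => σB (Fin.cast d.hg (ι (Fin.cast d.hk i)))
      · intro x y hxy
        apply hσB
        exact hιmono (Fin.cast d.hk x) (Fin.cast d.hk y) hxy
      · intro i
        show d.g (Fin.cast hnB (WB.s (σB _))) = R.s i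
        rw [hσBc, show (Fin.cast d.hg (ι (Fin.cast d.hk i))) =
          (Fin.cast d.hg (ι (Fin.cast d.hk i))) from rfl]
        rw [← d.agree, hι, ← d.s_eq]
      · intro x hx
        obtain ⟨b, rfl⟩ := gsurj x
        obtain ⟨i, hi⟩ := hminB b (minB_g' b hx)
        exact ⟨i, by show d.g _ = _; rw [hi]⟩
      · exact fun i => τB (Fin.cast d.hm i)
      · intro x y hxy; exact hτB hxy
      · intro i
        show d.g (Fin.cast hnB (WB.t (τB _))) = R.t i
        rw [hτBc, ← d.t_eq]
      · intro x hx
        obtain ⟨b, rfl⟩ := gsurj x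
        obtain ⟨i, hi⟩ := hmaxB b (maxB_g b hx)
        exact ⟨i, by show d.g _ = _; rw [hi]⟩
    · push_neg at hAT
      by_cases hBS : ∀ x, ∃ j, B.s j = x
      · -- B.s surjective : R is A with renamed targets
        have hBdisc : ∀ x y, ¬ B.lt x y := by
          intro x y hxy
          obtain ⟨j, rfl⟩ := hBS y
          exact B.s_min j x hxy
        have fsurj : ∀ x, ∃ a, d.f a = x := by
          intro x
          rcases d.cover x with ha | ⟨b, rfl⟩
          · exact ha
          · obtain ⟨j, rfl⟩ := hBS b
            refine ⟨A.t (Fin.cast d.hg.symm j), ?_⟩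
            rw [d.agree]
            have he : Fin.cast d.hg (Fin.cast d.hg.symm j) = j := Fin.ext rfl
            rw [he]
        have hltff : ∀ x y, R.lt (d.f x) (d.f y) ↔ A.lt x y := by
          intro x y
          constructor
          · intro hxy
            rcases (d.order _ _).mp hxy with ⟨a', b', h1, h2, h3⟩ |
              ⟨a', b', h1, h2, h3⟩ | ⟨a', b', h1, h2, h3, h4⟩
            · rw [d.f_inj h1, d.f_inj h2] at h3; exact h3
            · exact absurd h3 (hBdisc _ _)
            · obtain ⟨j, hj⟩ := hBS b'
              exact absurd hj.symm (h4 j)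
          · intro hxy
            exact (d.order _ _).mpr (Or.inl ⟨x, y, rfl, rfl, hxy⟩)
        have hκ : ∀ i : Fin B.m, ∃ r : Fin B.k, B.s r = B.t i := fun i => hBS (B.t i)
        choose κ hκ using hκ
        have icB := gp_ic hB
        have hκmono : ∀ x y : Fin B.m, (x : ℕ) < (y : ℕ) → (κ x : ℕ) < (κ y : ℕ) := by
          intro x y hxy
          exact (icB (κ x) (κ y) x y (hκ x) (hκ y)).mpr hxy
        have maxA_f : ∀ a, IsMaxEl A a → IsMaxEl R (d.f a) := by
          intro a ha y hy
          obtain ⟨a', rfl⟩ := fsurj y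
          exact ha a' ((hltff _ _).mp hy)
        have maxA_f' : ∀ a, IsMaxEl R (d.f a) → IsMaxEl A a := by
          intro a ha y hy
          exact ha (d.f y) ((hltff _ _).mpr hy)
        refine ⟨⟨R.n, R.lt, R.lt_irrefl, R.lt_trans, WA.k, WA.m,
          fun i => d.f (Fin.cast hnA (WA.s i)), fun i => d.f (Fin.cast hnA (WA.t i)),
          ?_, ?_, ?_, ?_⟩, rfl, fun x y => Iff.rfl, ?_, ⟨?_, ?_, ?_⟩, ?_, ⟨?_, ?_, ?_⟩, ?_⟩
        · intro a b hab
          exact WA.s_inj (cast_inj hnA (d.f_inj hab))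
        · intro a b hab
          exact WA.t_inj (cast_inj hnA (d.f_inj hab))
        · intro i x
          exact minP_f _ ((min_transfer hnA hltA _).mp (fun y => WA.s_min i y)) x
        · intro i x
          exact maxA_f _ ((max_transfer hnA hltA _).mp (fun y => WA.t_max i y)) x
        · refine gp_transport WA _ hgpA (fun x => d.f (Fin.cast hnA x)) ⟨?_, ?_⟩
            ?_ rfl rfl (fun i => rfl) (fun i => rfl)
          · intro a b hab
            exact cast_inj hnA (d.f_inj hab)
          · intro x
            obtain ⟨a, rfl⟩ := fsurj x
            exact ⟨Fin.cast hnA.symm a, congrArg d.f (Fin.ext rfl)⟩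
          · intro x y
            show R.lt _ _ ↔ _
            rw [hltff]
            exact (hltA x y).symm
        · exact fun i => σA (Fin.cast d.hk i)
        · intro x y hxy; exact hσA hxy
        · intro i
          show d.f (Fin.cast hnA (WA.s (σA _))) = R.s i
          rw [hσAc, ← d.s_eq]
        · intro x hx
          obtain ⟨a, rfl⟩ := fsurj x
          obtain ⟨i, hi⟩ := hminA a (minA_f a hx)
          exact ⟨i, by show d.f _ = _; rw [hi]⟩
        · exact fun i => τA (Fin.cast d.hg.symm (κ (Fin.cast d.hm i)))
        · intro x y hxy
          apply hτA
          exact hκmono (Fin.cast d.hm x) (Fin.cast d.hm y) hxy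
        · intro i
          show d.f (Fin.cast hnA (WA.t (τA _))) = R.t i
          rw [hτAc]
          have h1 : d.f (A.t (Fin.cast d.hg.symm (κ (Fin.cast d.hm i)))) =
              d.g (B.s (κ (Fin.cast d.hm i))) := by
            rw [d.agree]
            have he : Fin.cast d.hg (Fin.cast d.hg.symm (κ (Fin.cast d.hm i))) =
              κ (Fin.cast d.hm i) := Fin.ext rfl
            rw [he]
          rw [h1, hκ, ← d.t_eq]
        · intro x hx
          obtain ⟨a, rfl⟩ := fsurj x
          obtain ⟨i, hi⟩ := hmaxA a (maxA_f' a hx)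
          exact ⟨i, by show d.f _ = _; rw [hi]⟩
      · -- main case: both a non-target in A and a non-source in B exist
        push_neg at hBS
        obtain ⟨a0, ha0⟩ := hAT
        obtain ⟨b0, hb0⟩ := hBS
        refine ⟨⟨R.n, R.lt, R.lt_irrefl, R.lt_trans, WA.k, WB.m,
          fun i => d.f (Fin.cast hnA (WA.s i)), fun i => d.g (Fin.cast hnB (WB.t i)),
          ?_, ?_, ?_, ?_⟩, rfl, fun x y => Iff.rfl, ?_, ⟨?_, ?_, ?_⟩, ?_, ⟨?_, ?_, ?_⟩, ?_⟩
        · intro a b hab; exact WA.s_inj (cast_inj hnA (d.f_inj hab))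
        · intro a b hab; exact WB.t_inj (cast_inj hnB (d.g_inj hab))
        · intro i x
          exact minP_f _ ((min_transfer hnA hltA _).mp (fun y => WA.s_min i y)) x
        · intro i x
          exact maxP_g _ ((max_transfer hnB hltB _).mp (fun y => WB.t_max i y)) x
        · -- GP of the middle Winkowski iposet
          refine GP.glue
            (⟨A.n, A.lt, A.lt_irrefl, A.lt_trans, WA.k, A.m,
              fun i => Fin.cast hnA (WA.s i), A.t,
              fun a b hab => WA.s_inj (cast_inj hnA hab), A.t_inj,
              fun i x hx => ((min_transfer hnA hltA (WA.s i)).mp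
                (fun y => WA.s_min i y)) x hx,
              A.t_max⟩ : Iposet)
            (⟨B.n, B.lt, B.lt_irrefl, B.lt_trans, B.k, WB.m, B.s,
              fun i => Fin.cast hnB (WB.t i), B.s_inj,
              fun a b hab => WB.t_inj (cast_inj hnB hab), B.s_min,
              fun i x hx => ((max_transfer hnB hltB (WB.t i)).mp
                (fun y => WB.t_max i y)) x hx⟩ : Iposet)
            _ ?_ ?_ ⟨?_⟩
          · -- GP Ahat = WA * TA
            refine GP.glue WA (mkD WA.m WA.m A.m id τA strictMono_id hτA) _
              hgpA (gp_mkD _ _ _ _ _ _ _) ⟨?_⟩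
            refine ⟨rfl, rfl, rfl, Fin.cast hnA, fun i => Fin.cast hnA (WA.t i),
              cast_inj hnA, fun a b hab => WA.t_inj (cast_inj hnA hab), ?_, ?_, ?_,
              ?_, fun i => rfl, fun i => (hτAc i).symm⟩
            · intro x; exact Or.inl ⟨Fin.cast hnA.symm x, Fin.ext rfl⟩
            · intro i; rfl
            · intro a b hab; exact ⟨b, cast_inj hnA hab⟩
            · intro x y
              constructor
              · intro hxy
                refine Or.inl ⟨Fin.cast hnA.symm x, Fin.cast hnA.symm y,
                  Fin.ext rfl, Fin.ext rfl, (hltA _ _).mpr ?_⟩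
                have hx : Fin.cast hnA (Fin.cast hnA.symm x) = x := Fin.ext rfl
                have hy : Fin.cast hnA (Fin.cast hnA.symm y) = y := Fin.ext rfl
                rw [hx, hy]; exact hxy
              · rintro (⟨a, b, rfl, rfl, hab⟩ | ⟨a, b, _, _, hab⟩ |
                  ⟨a, b, _, _, _, hnb⟩)
                · exact (hltA _ _).mp hab
                · exact hab.elim
                · exact (hnb b rfl).elim
          · -- GP Bhat = SB * WB
            refine GP.glue (mkD WB.k B.k WB.k σB id hσB strictMono_id) WB _
              (gp_mkD _ _ _ _ _ _ _) hgpB ⟨?_⟩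
            refine ⟨rfl, rfl, rfl, fun i => Fin.cast hnB (WB.s i), Fin.cast hnB,
              fun a b hab => WB.s_inj (cast_inj hnB hab), cast_inj hnB, ?_, ?_, ?_,
              ?_, fun i => (hσBc i).symm, fun i => rfl⟩
            · intro x; exact Or.inr ⟨Fin.cast hnB.symm x, Fin.ext rfl⟩
            · intro i; rfl
            · intro a b _; exact ⟨a, rfl⟩
            · intro x y
              constructor
              · intro hxy
                refine Or.inr (Or.inl ⟨Fin.cast hnB.symm x, Fin.cast hnB.symm y,
                  Fin.ext rfl, Fin.ext rfl, (hltB _ _).mpr ?_⟩)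
                have hx : Fin.cast hnB (Fin.cast hnB.symm x) = x := Fin.ext rfl
                have hy : Fin.cast hnB (Fin.cast hnB.symm y) = y := Fin.ext rfl
                rw [hx, hy]; exact hxy
              · rintro (⟨a, b, _, _, hab⟩ | ⟨a, b, rfl, rfl, hab⟩ |
                  ⟨a, b, _, _, hna, _⟩)
                · exact hab.elim
                · exact (hltB _ _).mp hab
                · exact (hna a rfl).elim
          · -- GluingData Ahat Bhat W
            exact ⟨d.hg, rfl, rfl, d.f, d.g, d.f_inj, d.g_inj, d.cover, d.agree,
              d.overlap, d.order, fun i => rfl, fun i => rfl⟩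
        · exact fun i => σA (Fin.cast d.hk i)
        · intro x y hxy; exact hσA hxy
        · intro i
          show d.f (Fin.cast hnA (WA.s (σA _))) = R.s i
          rw [hσAc, ← d.s_eq]
        · -- source surjectivity onto minimal elements
          intro x hx
          rcases d.cover x with ⟨a, rfl⟩ | ⟨b, rfl⟩
          · obtain ⟨i, hi⟩ := hminA a (minA_f a hx)
            exact ⟨i, by show d.f _ = _; rw [hi]⟩
          · by_cases hbs : ∃ j, B.s j = b
            · obtain ⟨j, rfl⟩ := hbs
              have he : d.f (A.t (Fin.cast d.hg.symm j)) = d.g (B.s j) := by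
                rw [d.agree]
                have he2 : Fin.cast d.hg (Fin.cast d.hg.symm j) = j := Fin.ext rfl
                rw [he2]
              have hmin : IsMinEl A (A.t (Fin.cast d.hg.symm j)) := by
                apply minA_f
                rw [he]; exact hx
              obtain ⟨i, hi⟩ := hminA _ hmin
              refine ⟨i, ?_⟩
              show d.f _ = _
              rw [hi, he]
            · push_neg at hbs
              exfalso
              apply hx (d.f a0)
              exact (d.order _ _).mpr (Or.inr (Or.inr ⟨a0, b, rfl, rfl,
                fun i hh => ha0 i hh.symm, fun j hh => hbs j hh.symm⟩))
        · exact fun i => τB (Fin.cast d.hm i)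
        · intro x y hxy; exact hτB hxy
        · intro i
          show d.g (Fin.cast hnB (WB.t (τB _))) = R.t i
          rw [hτBc, ← d.t_eq]
        · -- target surjectivity onto maximal elements
          intro x hx
          rcases d.cover x with ⟨a, rfl⟩ | ⟨b, rfl⟩
          · by_cases hat : ∃ i, A.t i = a
            · obtain ⟨i, rfl⟩ := hat
              have he : d.f (A.t i) = d.g (B.s (Fin.cast d.hg i)) := d.agree i
              have hmax : IsMaxEl B (B.s (Fin.cast d.hg i)) := by
                apply maxB_g
                rw [← he]; exact hx
              obtain ⟨i2, hi2⟩ := hmaxB _ hmax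
              exact ⟨i2, by show d.g _ = _; rw [hi2, ← he]⟩
            · push_neg at hat
              exfalso
              apply hx (d.g b0)
              exact (d.order _ _).mpr (Or.inr (Or.inr ⟨a, b0, rfl, rfl,
                fun i hh => hat i hh.symm, fun j hh => hb0 j hh.symm⟩))
          · obtain ⟨i, hi⟩ := hmaxB b (maxB_g b hx)
            exact ⟨i, by show d.g _ = _; rw [hi]⟩
  | par A B R hA hB hp ihA ihB =>
    obtain ⟨d⟩ := hp
    obtain ⟨WA, hnA, hltA, hgpA, ⟨σA, hσA, hσAc⟩, hminA, ⟨τA, hτA, hτAc⟩, hmaxA⟩ := ihA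
    obtain ⟨WB, hnB, hltB, hgpB, ⟨σB, hσB, hσBc⟩, hminB, ⟨τB, hτB, hτBc⟩, hmaxB⟩ := ihB
    have minf : ∀ a, IsMinEl R (d.f a) ↔ IsMinEl A a := by
      intro a
      constructor
      · intro ha y hy
        exact ha (d.f y) ((d.order _ _).mpr (Or.inl ⟨y, a, rfl, rfl, hy⟩))
      · intro ha y hy
        rcases (d.order y (d.f a)).mp hy with ⟨a', b', h1, h2, h3⟩ | ⟨a', b', h1, h2, h3⟩
        · exact ha a' ((d.f_inj h2) ▸ h3)
        · exact d.disjoint a b' h2.symm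
    have ming : ∀ b, IsMinEl R (d.g b) ↔ IsMinEl B b := by
      intro b
      constructor
      · intro hb y hy
        exact hb (d.g y) ((d.order _ _).mpr (Or.inr ⟨y, b, rfl, rfl, hy⟩))
      · intro hb y hy
        rcases (d.order y (d.g b)).mp hy with ⟨a', b', h1, h2, h3⟩ | ⟨a', b', h1, h2, h3⟩
        · exact d.disjoint _ _ h2
        · exact hb a' ((d.g_inj h2) ▸ h3)
    have maxf : ∀ a, IsMaxEl R (d.f a) ↔ IsMaxEl A a := by
      intro a
      constructor
      · intro ha y hy
        exact ha (d.f y) ((d.order _ _).mpr (Or.inl ⟨a, y, rfl, rfl, hy⟩))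
      · intro ha y hy
        rcases (d.order (d.f a) y).mp hy with ⟨a', b', h1, h2, h3⟩ | ⟨a', b', h1, h2, h3⟩
        · exact ha b' ((d.f_inj h1) ▸ h3)
        · exact d.disjoint a a' h1.symm
    have maxg : ∀ b, IsMaxEl R (d.g b) ↔ IsMaxEl B b := by
      intro b
      constructor
      · intro hb y hy
        exact hb (d.g y) ((d.order _ _).mpr (Or.inr ⟨b, y, rfl, rfl, hy⟩))
      · intro hb y hy
        rcases (d.order (d.g b) y).mp hy with ⟨a', b', h1, h2, h3⟩ | ⟨a', b', h1, h2, h3⟩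
        · exact d.disjoint _ _ h1
        · exact hb b' ((d.g_inj h1) ▸ h3)
    refine ⟨⟨R.n, R.lt, R.lt_irrefl, R.lt_trans, WA.k + WB.k, WA.m + WB.m,
      Fin.addCases (motive := fun _ => Fin R.n)
        (fun i => d.f (Fin.cast hnA (WA.s i))) (fun j => d.g (Fin.cast hnB (WB.s j))),
      Fin.addCases (motive := fun _ => Fin R.n)
        (fun i => d.f (Fin.cast hnA (WA.t i))) (fun j => d.g (Fin.cast hnB (WB.t j))),
      ?_, ?_, ?_, ?_⟩, rfl, fun x y => Iff.rfl, ?_, ⟨?_, ?_, ?_⟩, ?_, ⟨?_, ?_, ?_⟩, ?_⟩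
    · -- s injective
      intro a b hab
      induction a using Fin.addCases with
      | left i =>
        induction b using Fin.addCases with
        | left i' =>
          rw [Fin.addCases_left, Fin.addCases_left] at hab
          exact congrArg _ (WA.s_inj (cast_inj hnA (d.f_inj hab)))
        | right j' =>
          rw [Fin.addCases_left, Fin.addCases_right] at hab
          exact absurd hab (d.disjoint _ _)
      | right j =>
        induction b using Fin.addCases with
        | left i' =>
          rw [Fin.addCases_right, Fin.addCases_left] at hab
          exact absurd hab.symm (d.disjoint _ _)
        | right j' =>
          rw [Fin.addCases_right, Fin.addCases_right] at hab
          exact congrArg _ (WB.s_inj (cast_inj hnB (d.g_inj hab)))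
    · -- t injective
      intro a b hab
      induction a using Fin.addCases with
      | left i =>
        induction b using Fin.addCases with
        | left i' =>
          rw [Fin.addCases_left, Fin.addCases_left] at hab
          exact congrArg _ (WA.t_inj (cast_inj hnA (d.f_inj hab)))
        | right j' =>
          rw [Fin.addCases_left, Fin.addCases_right] at hab
          exact absurd hab (d.disjoint _ _)
      | right j =>
        induction b using Fin.addCases with
        | left i' =>
          rw [Fin.addCases_right, Fin.addCases_left] at hab
          exact absurd hab.symm (d.disjoint _ _)
        | right j' =>
          rw [Fin.addCases_right, Fin.addCases_right] at hab
          exact congrArg _ (WB.t_inj (cast_inj hnB (d.g_inj hab)))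
    · -- s minimal
      intro i x
      induction i using Fin.addCases with
      | left i =>
        rw [Fin.addCases_left]
        exact (minf _).mpr ((min_transfer hnA hltA _).mp (fun y => WA.s_min i y)) x
      | right j =>
        rw [Fin.addCases_right]
        exact (ming _).mpr ((min_transfer hnB hltB _).mp (fun y => WB.s_min j y)) x
    · -- t maximal
      intro i x
      induction i using Fin.addCases with
      | left i =>
        rw [Fin.addCases_left]
        exact (maxf _).mpr ((max_transfer hnA hltA _).mp (fun y => WA.t_max i y)) x
      | right j =>
        rw [Fin.addCases_right]
        exact (maxg _).mpr ((max_transfer hnB hltB _).mp (fun y => WB.t_max j y)) x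
    · -- GP via par
      refine GP.par WA WB _ hgpA hgpB ⟨?_⟩
      refine ⟨rfl, rfl, fun x => d.f (Fin.cast hnA x), fun x => d.g (Fin.cast hnB x),
        fun a b hab => cast_inj hnA (d.f_inj hab),
        fun a b hab => cast_inj hnB (d.g_inj hab), ?_, ?_, ?_, ?_, ?_, ?_, ?_⟩
      · intro x
        rcases d.cover x with ⟨a, rfl⟩ | ⟨b, rfl⟩
        · exact Or.inl ⟨Fin.cast hnA.symm a, congrArg d.f (Fin.ext rfl)⟩
        · exact Or.inr ⟨Fin.cast hnB.symm b, congrArg d.g (Fin.ext rfl)⟩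
      · intro a b hab
        exact d.disjoint _ _ hab
      · intro x y
        show R.lt x y ↔ _
        rw [d.order]
        constructor
        · rintro (⟨a, b, rfl, rfl, hab⟩ | ⟨a, b, rfl, rfl, hab⟩)
          · refine Or.inl ⟨Fin.cast hnA.symm a, Fin.cast hnA.symm b,
              congrArg d.f (Fin.ext rfl), congrArg d.f (Fin.ext rfl),
              (hltA _ _).mpr ?_⟩
            have h1 : Fin.cast hnA (Fin.cast hnA.symm a) = a := Fin.ext rfl
            have h2 : Fin.cast hnA (Fin.cast hnA.symm b) = b := Fin.ext rfl
            rw [h1, h2]; exact hab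
          · refine Or.inr ⟨Fin.cast hnB.symm a, Fin.cast hnB.symm b,
              congrArg d.g (Fin.ext rfl), congrArg d.g (Fin.ext rfl),
              (hltB _ _).mpr ?_⟩
            have h1 : Fin.cast hnB (Fin.cast hnB.symm a) = a := Fin.ext rfl
            have h2 : Fin.cast hnB (Fin.cast hnB.symm b) = b := Fin.ext rfl
            rw [h1, h2]; exact hab
        · rintro (⟨a, b, rfl, rfl, hab⟩ | ⟨a, b, rfl, rfl, hab⟩)
          · exact Or.inl ⟨_, _, rfl, rfl, (hltA _ _).mp hab⟩
          · exact Or.inr ⟨_, _, rfl, rfl, (hltB _ _).mp hab⟩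
      · intro i
        simp only [Fin.cast_eq_self]
        exact Fin.addCases_left i
      · intro i
        simp only [Fin.cast_eq_self]
        exact Fin.addCases_right i
      · intro i
        simp only [Fin.cast_eq_self]
        exact Fin.addCases_left i
      · intro i
        simp only [Fin.cast_eq_self]
        exact Fin.addCases_right i
    · -- σ
      exact fun i =>
        if h : (i : ℕ) < A.k then Fin.castAdd WB.k (σA ⟨(i : ℕ), h⟩)
        else Fin.natAdd WA.k (σB ⟨(i : ℕ) - A.k,
          by have h2 := i.isLt; have h3 := d.hk; omega⟩)
    · -- σ strict mono
      intro x y hxy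
      rw [Fin.lt_def] at hxy
      by_cases hx : (x : ℕ) < A.k <;> by_cases hy : (y : ℕ) < A.k <;>
        rw [Fin.lt_def]
      · simp only [dif_pos hx, dif_pos hy]
        simp only [Fin.coe_castAdd]
        have := hσA (show (⟨(x : ℕ), hx⟩ : Fin A.k) < ⟨(y : ℕ), hy⟩ by
          rw [Fin.lt_def]; exact hxy)
        rw [Fin.lt_def] at this
        exact this
      · simp only [dif_pos hx, dif_neg hy]
        simp only [Fin.coe_castAdd, Fin.coe_natAdd]
        have := (σA ⟨(x : ℕ), hx⟩).isLt
        omega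
      · exact absurd hxy (by omega)
      · simp only [dif_neg hx, dif_neg hy]
        simp only [Fin.coe_natAdd]
        have := hσB (show (⟨(x : ℕ) - A.k, by have := x.isLt; have := d.hk; omega⟩ : Fin B.k) <
            ⟨(y : ℕ) - A.k, by have := y.isLt; have := d.hk; omega⟩ by
          rw [Fin.lt_def]; simp; omega)
        rw [Fin.lt_def] at this
        omega
    · -- σ compatible
      intro i
      by_cases h : (i : ℕ) < A.k
      · simp only [dif_pos h]
        simp only [Fin.cast_eq_self]
        show Fin.addCases _ _ (Fin.castAdd WB.k (σA ⟨(i : ℕ), h⟩)) = R.s i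
        rw [Fin.addCases_left, hσAc]
        have hi : i = Fin.cast d.hk.symm (Fin.castAdd B.k ⟨(i : ℕ), h⟩) :=
          Fin.ext rfl
        conv_rhs => rw [hi]
        exact (d.s_eq₁ _).symm
      · simp only [dif_neg h]
        simp only [Fin.cast_eq_self]
        show Fin.addCases _ _ (Fin.natAdd WA.k (σB _)) = R.s i
        rw [Fin.addCases_right, hσBc]
        have hi : i = Fin.cast d.hk.symm (Fin.natAdd A.k ⟨(i : ℕ) - A.k,
            by have h2 := i.isLt; have h3 := d.hk; omega⟩) :=
          Fin.ext (by simp; have h2 := i.isLt; have h3 := d.hk; omega)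
        conv_rhs => rw [hi]
        exact (d.s_eq₂ _).symm
    · -- s surjective on mins
      intro x hx
      rcases d.cover x with ⟨a, rfl⟩ | ⟨b, rfl⟩
      · obtain ⟨i, hi⟩ := hminA a ((minf a).mp hx)
        refine ⟨Fin.castAdd WB.k i, ?_⟩
        simp only [Fin.cast_eq_self]
        exact (Fin.addCases_left i).trans (congrArg d.f hi)
      · obtain ⟨j, hj⟩ := hminB b ((ming b).mp hx)
        refine ⟨Fin.natAdd WA.k j, ?_⟩
        simp only [Fin.cast_eq_self]
        exact (Fin.addCases_right j).trans (congrArg d.g hj)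
    · -- τ
      exact fun i =>
        if h : (i : ℕ) < A.m then Fin.castAdd WB.m (τA ⟨(i : ℕ), h⟩)
        else Fin.natAdd WA.m (τB ⟨(i : ℕ) - A.m,
          by have h2 := i.isLt; have h3 := d.hm; omega⟩)
    · -- τ strict mono
      intro x y hxy
      rw [Fin.lt_def] at hxy
      by_cases hx : (x : ℕ) < A.m <;> by_cases hy : (y : ℕ) < A.m <;>
        rw [Fin.lt_def]
      · simp only [dif_pos hx, dif_pos hy]
        simp only [Fin.coe_castAdd]
        have := hτA (show (⟨(x : ℕ), hx⟩ : Fin A.m) < ⟨(y : ℕ), hy⟩ by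
          rw [Fin.lt_def]; exact hxy)
        rw [Fin.lt_def] at this
        exact this
      · simp only [dif_pos hx, dif_neg hy]
        simp only [Fin.coe_castAdd, Fin.coe_natAdd]
        have := (τA ⟨(x : ℕ), hx⟩).isLt
        omega
      · exact absurd hxy (by omega)
      · simp only [dif_neg hx, dif_neg hy]
        simp only [Fin.coe_natAdd]
        have := hτB (show (⟨(x : ℕ) - A.m, by have := x.isLt; have := d.hm; omega⟩ : Fin B.m) <
            ⟨(y : ℕ) - A.m, by have := y.isLt; have := d.hm; omega⟩ by
          rw [Fin.lt_def]; simp; omega)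
        rw [Fin.lt_def] at this
        omega
    · -- τ compatible
      intro i
      by_cases h : (i : ℕ) < A.m
      · simp only [dif_pos h]
        simp only [Fin.cast_eq_self]
        show Fin.addCases _ _ (Fin.castAdd WB.m (τA ⟨(i : ℕ), h⟩)) = R.t i
        rw [Fin.addCases_left, hτAc]
        have hi : i = Fin.cast d.hm.symm (Fin.castAdd B.m ⟨(i : ℕ), h⟩) :=
          Fin.ext rfl
        conv_rhs => rw [hi]
        exact (d.t_eq₁ _).symm
      · simp only [dif_neg h]
        simp only [Fin.cast_eq_self]
        show Fin.addCases _ _ (Fin.natAdd WA.m (τB _)) = R.t i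
        rw [Fin.addCases_right, hτBc]
        have hi : i = Fin.cast d.hm.symm (Fin.natAdd A.m ⟨(i : ℕ) - A.m,
            by have h2 := i.isLt; have h3 := d.hm; omega⟩) :=
          Fin.ext (by simp; have h2 := i.isLt; have h3 := d.hm; omega)
        conv_rhs => rw [hi]
        exact (d.t_eq₂ _).symm
    · -- t surjective on maxes
      intro x hx
      rcases d.cover x with ⟨a, rfl⟩ | ⟨b, rfl⟩
      · obtain ⟨i, hi⟩ := hmaxA a ((maxf a).mp hx)
        refine ⟨Fin.castAdd WB.m i, ?_⟩
        simp only [Fin.cast_eq_self]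
        exact (Fin.addCases_left i).trans (congrArg d.f hi)
      · obtain ⟨j, hj⟩ := hmaxB b ((maxg b).mp hx)
        refine ⟨Fin.natAdd WA.m j, ?_⟩
        simp only [Fin.cast_eq_self]
        exact (Fin.addCases_right j).trans (congrArg d.g hj)

end Iposet

open Iposet in
/-- Every gluing-parallel iposet `P` decomposes as `P = S * W * T` with `S`
a gp-starter, `W` a gp-Winkowski iposet and `T` a gp-terminator. -/
theorem gp_decomp_SWT (P : Iposet) (h : GP P) :
    ∃ S W T X : Iposet, Starter S ∧ GP S ∧ Wink W ∧ GP W ∧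
      Terminator T ∧ GP T ∧ IsGluing S W X ∧ IsGluing X T P := by

  obtain ⟨W, hn, hlt, hgp, ⟨σ, hσ, hσc⟩, hsurjs, ⟨τ, hτ, hτc⟩, hsurjt⟩ := gp_wink h
  have castinj : Function.Injective (Fin.cast hn) := fun a b hab => by
    have : (Fin.cast hn a : ℕ) = (Fin.cast hn b : ℕ) := congrArg Fin.val hab
    exact Fin.ext this
  refine ⟨mkD W.k P.k W.k σ id hσ strictMono_id, W,
    mkD W.m W.m P.m id τ strictMono_id hτ,
    ⟨P.n, P.lt, P.lt_irrefl, P.lt_trans, P.k, W.m, P.s,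
      fun i => Fin.cast hn (W.t i), P.s_inj,
      fun a b hab => W.t_inj (castinj hab), P.s_min, ?_⟩,
    ⟨fun _ _ hf => hf, Function.bijective_id⟩, gp_mkD _ _ _ _ _ _ _,
    ⟨?_, ?_⟩, hgp,
    ⟨fun _ _ hf => hf, Function.bijective_id⟩, gp_mkD _ _ _ _ _ _ _,
    ⟨?_⟩, ⟨?_⟩⟩
  · -- t_max for X
    intro i x hx
    have : W.lt (W.t i) (Fin.cast hn.symm x) := by
      apply (hlt _ _).mpr
      have he : Fin.cast hn (Fin.cast hn.symm x) = x := Fin.ext rfl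
      rw [he]
      exact hx
    exact W.t_max i _ this
  · -- LeftWink W
    intro x
    constructor
    · intro hmin
      have hminP : IsMinEl P (Fin.cast hn x) := by
        intro y hy
        apply hmin (Fin.cast hn.symm y)
        apply (hlt _ _).mpr
        have he : Fin.cast hn (Fin.cast hn.symm y) = y := Fin.ext rfl
        rw [he]
        exact hy
      obtain ⟨i, hi⟩ := hsurjs _ hminP
      exact ⟨i, castinj hi⟩
    · rintro ⟨i, rfl⟩
      exact fun y => W.s_min i y
  · -- RightWink W
    intro x
    constructor
    · intro hmax
      have hmaxP : IsMaxEl P (Fin.cast hn x) := by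
        intro y hy
        apply hmax (Fin.cast hn.symm y)
        apply (hlt _ _).mpr
        have he : Fin.cast hn (Fin.cast hn.symm y) = y := Fin.ext rfl
        rw [he]
        exact hy
      obtain ⟨i, hi⟩ := hsurjt _ hmaxP
      exact ⟨i, castinj hi⟩
    · rintro ⟨i, rfl⟩
      exact fun y => W.t_max i y
  · -- GluingData S W X
    refine ⟨rfl, rfl, rfl, fun i => Fin.cast hn (W.s i), Fin.cast hn,
      fun a b hab => W.s_inj (castinj hab), castinj, ?_, ?_, ?_, ?_, ?_, ?_⟩
    · intro x
      exact Or.inr ⟨Fin.cast hn.symm x, Fin.ext rfl⟩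
    · intro i; rfl
    · intro a b _; exact ⟨a, rfl⟩
    · intro x y
      constructor
      · intro hxy
        refine Or.inr (Or.inl ⟨Fin.cast hn.symm x, Fin.cast hn.symm y,
          Fin.ext rfl, Fin.ext rfl, ?_⟩)
        apply (hlt _ _).mpr
        have hex : Fin.cast hn (Fin.cast hn.symm x) = x := Fin.ext rfl
        have hey : Fin.cast hn (Fin.cast hn.symm y) = y := Fin.ext rfl
        rw [hex, hey]
        exact hxy
      · rintro (⟨a, b, _, _, hab⟩ | ⟨a, b, rfl, rfl, hab⟩ | ⟨a, b, _, _, hna, _⟩)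
        · exact hab.elim
        · exact (hlt _ _).mp hab
        · exact (hna a rfl).elim
    · intro i
      exact (hσc i).symm
    · intro i; rfl
  · -- GluingData X T P
    refine ⟨rfl, rfl, rfl, id, fun i => Fin.cast hn (W.t i), fun a b hab => hab,
      fun a b hab => W.t_inj (castinj hab), ?_, ?_, ?_, ?_, ?_, ?_⟩
    · intro x; exact Or.inl ⟨x, rfl⟩
    · intro i; rfl
    · intro a b hab; exact ⟨b, hab⟩
    · intro x y
      constructor
      · intro hxy
        exact Or.inl ⟨x, y, rfl, rfl, hxy⟩
      · rintro (⟨a, b, rfl, rfl, hab⟩ | ⟨a, b, _, _, hab⟩ | ⟨a, b, _, _, _, hnb⟩)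
        · exact hab
        · exact hab.elim
        · exact (hnb b rfl).elim
    · intro i; rfl
    · intro i
      exact (hτc i).symm
end

section
/- Every discrete iposet D can be written as a gluing D = σ*Q = R*τ where σ, τ are symmetries and Q, R are interface-consistent discrete iposets. -/
/-- Key for sorting source positions: the `t`-index of the source value, if any. -/
noncomputable def Iposet.skey (D : Iposet) (i : Fin D.k) : ℕ :=
  if h : ∃ j, D.t j = D.s i then (h.choose : Fin D.m).val else 0

/-- Key for sorting target positions: the `s`-index of the target value, if any. -/
noncomputable def Iposet.tkey (D : Iposet) (j : Fin D.m) : ℕ :=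
  if h : ∃ i, D.s i = D.t j then (h.choose : Fin D.k).val else 0

theorem Iposet.skey_eq (D : Iposet) (i : Fin D.k) (i' : Fin D.m)
    (hi : D.s i = D.t i') : D.skey i = (i' : ℕ) := by
  have hex : ∃ j, D.t j = D.s i := ⟨i', hi.symm⟩
  rw [Iposet.skey, dif_pos hex]
  exact congrArg Fin.val (D.t_inj (hex.choose_spec.trans hi))

theorem Iposet.tkey_eq (D : Iposet) (i : Fin D.k) (i' : Fin D.m)
    (hi : D.s i = D.t i') : D.tkey i' = (i : ℕ) := by
  have hex : ∃ j, D.s j = D.t i' := ⟨i, hi⟩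
  rw [Iposet.tkey, dif_pos hex]
  exact congrArg Fin.val (D.s_inj (hex.choose_spec.trans hi.symm))

open Iposet in
/-- Every discrete iposet `D` can be written as a gluing `D = σ * Q` and as
`D = R * τ` with `σ`, `τ` symmetries and `Q`, `R` interface-consistent
discrete iposets. -/
theorem discrete_symmetry_decomp (D : Iposet) (h : Discrete D) :
    (∃ σ Q : Iposet, Symmetry σ ∧ Discrete Q ∧ InterfaceConsistent Q ∧
      IsGluing σ Q D) ∧
    (∃ R τ : Iposet, Symmetry τ ∧ Discrete R ∧ InterfaceConsistent R ∧
      IsGluing R τ D) := by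
  constructor
  · -- left decomposition D = σ * Q
    set π : Equiv.Perm (Fin D.k) := Tuple.sort D.skey with hπ
    refine ⟨{ n := D.k, lt := fun _ _ => False, lt_irrefl := fun _ hx => hx,
              lt_trans := fun _ _ _ hx _ => hx.elim, k := D.k, m := D.k,
              s := id, t := π, s_inj := fun _ _ hx => hx, t_inj := π.injective,
              s_min := fun _ _ hx => hx, t_max := fun _ _ hx => hx },
            { D with s := D.s ∘ π, s_inj := D.s_inj.comp π.injective,
                     s_min := fun i x => D.s_min (π i) x }, ?_, ?_, ?_, ?_⟩
    · exact ⟨fun _ _ hx => hx, Function.bijective_id, π.bijective⟩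
    · exact h
    · -- interface consistency
      have mono : ∀ (i j : Fin D.k) (i' j' : Fin D.m),
          D.s (π i) = D.t i' → D.s (π j) = D.t j' → i < j → (i' : ℕ) < (j' : ℕ) := by
        intro i j i' j' h1 h2 hij
        have hle : D.skey (π i) ≤ D.skey (π j) := Tuple.monotone_sort D.skey hij.le
        rw [D.skey_eq _ _ h1, D.skey_eq _ _ h2] at hle
        rcases lt_or_eq_of_le hle with hlt | heq
        · exact hlt
        · exfalso
          have : i' = j' := Fin.ext heq
          have : π i = π j := D.s_inj (by rw [h1, h2, this])
          exact absurd (π.injective this) hij.ne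
      intro i j i' j' h1 h2
      constructor
      · intro hij; exact mono i j i' j' h1 h2 (Fin.lt_def.mpr hij)
      · intro hij
        rcases lt_trichotomy i j with hlt | heq | hgt
        · exact hlt
        · exfalso
          subst heq
          have : i' = j' := D.t_inj (h1.symm.trans h2)
          omega
        · exact absurd hij (by have := mono j i j' i' h2 h1 hgt; omega)
    · -- gluing data
      refine ⟨⟨rfl, rfl, rfl, D.s, id, D.s_inj, fun _ _ hx => hx,
        fun x => Or.inr ⟨x, rfl⟩, fun i => rfl,
        fun a b _ => ⟨π.symm a, (π.apply_symm_apply a).symm⟩,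
        fun x y => ?_, fun i => rfl, fun i => rfl⟩⟩
      constructor
      · intro hxy; exact absurd hxy (h x y)
      · rintro (⟨a, b, _, _, hf⟩ | ⟨a, b, _, _, hf⟩ | ⟨a, b, _, _, hna, _⟩)
        · exact hf.elim
        · exact absurd hf (h a b)
        · exact absurd (π.apply_symm_apply a).symm (hna (π.symm a))
  · -- right decomposition D = R * τ
    set π : Equiv.Perm (Fin D.m) := Tuple.sort D.tkey with hπ
    refine ⟨{ D with t := D.t ∘ π, t_inj := D.t_inj.comp π.injective,
                     t_max := fun i x => D.t_max (π i) x },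
            { n := D.m, lt := fun _ _ => False, lt_irrefl := fun _ hx => hx,
              lt_trans := fun _ _ _ hx _ => hx.elim, k := D.m, m := D.m,
              s := π, t := id, s_inj := π.injective, t_inj := fun _ _ hx => hx,
              s_min := fun _ _ hx => hx, t_max := fun _ _ hx => hx }, ?_, ?_, ?_, ?_⟩
    · exact ⟨fun _ _ hx => hx, π.bijective, Function.bijective_id⟩
    · exact h
    · -- interface consistency
      have mono : ∀ (i j : Fin D.k) (i' j' : Fin D.m),
          D.s i = D.t (π i') → D.s j = D.t (π j') → i' < j' → (i : ℕ) < (j : ℕ) := by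
        intro i j i' j' h1 h2 hij
        have hle : D.tkey (π i') ≤ D.tkey (π j') := Tuple.monotone_sort D.tkey hij.le
        rw [D.tkey_eq _ _ h1, D.tkey_eq _ _ h2] at hle
        rcases lt_or_eq_of_le hle with hlt | heq
        · exact hlt
        · exfalso
          have : i = j := Fin.ext heq
          have : π i' = π j' := D.t_inj (by rw [← h1, ← h2, this])
          exact absurd (π.injective this) hij.ne
      intro i j i' j' h1 h2
      constructor
      · intro hij
        rcases lt_trichotomy i' j' with hlt | heq | hgt
        · exact hlt
        · exfalso
          subst heq
          have : i = j := D.s_inj (h1.trans h2.symm)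
          omega
        · exact absurd hij (by have := mono j i j' i' h2 h1 hgt; omega)
      · intro hij; exact mono i j i' j' h1 h2 (Fin.lt_def.mpr hij)
    · -- gluing data
      refine ⟨⟨rfl, rfl, rfl, id, D.t, fun _ _ hx => hx, D.t_inj,
        fun x => Or.inl ⟨x, rfl⟩, fun i => rfl,
        fun a b hab => ⟨π.symm b, by show _ = D.t (π (π.symm b)); rw [Equiv.apply_symm_apply]; exact hab⟩,
        fun x y => ?_, fun i => rfl, fun i => rfl⟩⟩
      constructor
      · intro hxy; exact absurd hxy (h x y)
      · rintro (⟨a, b, _, _, hf⟩ | ⟨a, b, _, _, hf⟩ | ⟨a, b, _, _, _, hnb⟩)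
        · exact absurd hf (h a b)
        · exact hf.elim
        · exact absurd (π.apply_symm_apply b).symm (hnb (π.symm b))
end
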